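/- Let c = (c_1,…,c_k) be a composition of size n and let f_c be the reduced composition polynomial, i.e. the polynomial of degree n − k with g_c(q) = (1−q)^k · f_c(q) for all q. Then every coefficient of f_c is a positive real number. -/

import Mathlib

open MeasureTheory

/-- Iterated integral defining the composition polynomial, peeling off the
outermost variable first (so the list argument is the reversed composition). -/
noncomputable def gAux : List ℕ → ℝ → ℝ → ℝ
  | [], _, _ => 1
  | a :: rest, q, u => ∫ t in q..u, t ^ (a - 1) * gAux rest q t

/-- The composition polynomial
`g_c(q) = ∫_q^1 ∫_q^{t_k} ⋯ ∫_q^{t_2} t_1^{c_1-1} ⋯ t_k^{c_k-1} dt_1 ⋯ dt_k`. -/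
noncomputable def gcomp (c : List ℕ) (q : ℝ) : ℝ := gAux c.reverse q 1

namespace RCPaux

/-- Degree bound: sum of `a - 1` over the list. -/
def Dl (l : List ℕ) : ℕ := (l.map (· - 1)).sum

lemma Dl_cons (a : ℕ) (l : List ℕ) : Dl (a :: l) = (a - 1) + Dl l := by
  simp [Dl]

/-- Polynomial-valued primitive: `(PH l y).eval q = gAux l q ((1-q)y+q) / (1-q)^len`. -/
noncomputable def PH : List ℕ → ℝ → Polynomial ℝ
  | [], _ => 1
  | a :: l, y =>
      ∑ i ∈ Finset.range (a - 1 + 1), ∑ m ∈ Finset.range (Dl l + 1),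
        Polynomial.C (((a - 1).choose i : ℝ) *
            ∫ x in (0:ℝ)..y, (1 - x) ^ i * x ^ (a - 1 - i) * (PH l x).coeff m) *
          Polynomial.X ^ (i + m)

lemma PH_coeff_cons (a : ℕ) (l : List ℕ) (y : ℝ) (j : ℕ) :
    (PH (a :: l) y).coeff j
      = ∑ i ∈ Finset.range (a - 1 + 1), ∑ m ∈ Finset.range (Dl l + 1),
          if j = i + m then
            ((a - 1).choose i : ℝ) *
              ∫ x in (0:ℝ)..y, (1 - x) ^ i * x ^ (a - 1 - i) * (PH l x).coeff m
          else 0 := by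
  rw [PH]
  simp only [Polynomial.finset_sum_coeff, Polynomial.coeff_C_mul, Polynomial.coeff_X_pow,
    mul_ite, mul_one, mul_zero]

lemma PH_coeff_continuous : ∀ (l : List ℕ) (m : ℕ), Continuous fun y => (PH l y).coeff m := by
  intro l
  induction l with
  | nil => intro m; simp only [PH]; exact continuous_const
  | cons a l ih =>
    intro j
    simp only [PH_coeff_cons]
    apply continuous_finset_sum; intro i _
    apply continuous_finset_sum; intro m _
    split
    · apply Continuous.mul continuous_const
      apply intervalIntegral.continuous_primitive
      intro u v
      exact (((continuous_const.sub continuous_id).pow i).mul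
        ((continuous_id.pow (a - 1 - i))) |>.mul (ih m)).intervalIntegrable u v
    · exact continuous_const

lemma integrand_continuous (l : List ℕ) (i e m : ℕ) :
    Continuous fun x : ℝ => (1 - x) ^ i * x ^ e * (PH l x).coeff m :=
  (((continuous_const.sub continuous_id).pow i).mul
    (continuous_id.pow e)).mul (PH_coeff_continuous l m)

lemma PH_natDegree_le : ∀ (l : List ℕ) (y : ℝ), (PH l y).natDegree ≤ Dl l := by
  intro l
  induction l with
  | nil => intro y; simp [PH, Dl]
  | cons a l _ =>
    intro y
    rw [PH]
    apply Polynomial.natDegree_sum_le_of_forall_le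
    intro i hi
    apply Polynomial.natDegree_sum_le_of_forall_le
    intro m hm
    refine le_trans (Polynomial.natDegree_C_mul_le _ _) ?_
    rw [Polynomial.natDegree_X_pow, Dl_cons]
    have hi' := Finset.mem_range.mp hi
    have hm' := Finset.mem_range.mp hm
    omega

lemma PH_key (l : List ℕ) (a : ℕ) (q y : ℝ) :
    (∫ x in (0:ℝ)..y, ((1 - q) * x + q) ^ (a - 1) * (PH l x).eval q)
      = (PH (a :: l) y).eval q := by
  set S := Finset.range (a - 1 + 1) ×ˢ Finset.range (Dl l + 1) with hS
  have h1 : ∀ x : ℝ, ((1 - q) * x + q) ^ (a - 1) * (PH l x).eval q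
      = ∑ p ∈ S, (((a - 1).choose p.1 : ℝ) * q ^ (p.1 + p.2)) *
            ((1 - x) ^ p.1 * x ^ (a - 1 - p.1) * (PH l x).coeff p.2) := by
    intro x
    rw [hS, Finset.sum_product]
    rw [Polynomial.eval_eq_sum_range'
      (lt_of_le_of_lt (PH_natDegree_le l x) (Nat.lt_succ_self (Dl l))) q]
    rw [show (1 - q) * x + q = q * (1 - x) + x by ring, add_pow, Finset.sum_mul_sum]
    apply Finset.sum_congr rfl; intro i _
    apply Finset.sum_congr rfl; intro m _
    rw [mul_pow]
    ring
  have h2 : (PH (a :: l) y).eval q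
      = ∑ p ∈ S, (((a - 1).choose p.1 : ℝ) *
          ∫ x in (0:ℝ)..y, (1 - x) ^ p.1 * x ^ (a - 1 - p.1) * (PH l x).coeff p.2)
            * q ^ (p.1 + p.2) := by
    rw [hS, Finset.sum_product, PH]
    simp [Polynomial.eval_finset_sum]
  have h3 := intervalIntegral.integral_finset_sum (μ := volume) (a := (0:ℝ)) (b := y)
    (s := S)
    (f := fun p x => (((a - 1).choose p.1 : ℝ) * q ^ (p.1 + p.2)) *
      ((1 - x) ^ p.1 * x ^ (a - 1 - p.1) * (PH l x).coeff p.2))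
    (fun p _ => (continuous_const.mul
      (integrand_continuous l p.1 (a - 1 - p.1) p.2)).intervalIntegrable 0 y)
  simp only [h1]
  rw [h3, h2]
  apply Finset.sum_congr rfl; intro p _
  rw [intervalIntegral.integral_const_mul]
  ring

lemma claimA : ∀ (l : List ℕ) (q : ℝ), q ≠ 1 → ∀ y : ℝ,
    gAux l q ((1 - q) * y + q) = (1 - q) ^ l.length * (PH l y).eval q := by
  intro l
  induction l with
  | nil => intro q hq y; simp [gAux, PH]
  | cons a l ih =>
    intro q hq y
    have hc : (1 - q) ≠ 0 := sub_ne_zero.mpr (Ne.symm hq)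
    show (∫ t in q..((1 - q) * y + q), t ^ (a - 1) * gAux l q t) = _
    have hsub := intervalIntegral.integral_comp_mul_add
      (a := (0:ℝ)) (b := y) (fun t => t ^ (a - 1) * gAux l q t) hc q
    have hstep : (∫ t in q..((1 - q) * y + q), t ^ (a - 1) * gAux l q t)
        = (1 - q) * ∫ x in (0:ℝ)..y, ((1 - q) * x + q) ^ (a - 1) * gAux l q ((1 - q) * x + q) := by
      rw [hsub, smul_eq_mul, ← mul_assoc, mul_inv_cancel₀ hc, one_mul]
      norm_num
    rw [hstep]
    simp only [ih q hq]
    have hre : ∀ x : ℝ, ((1 - q) * x + q) ^ (a - 1) * ((1 - q) ^ l.length * (PH l x).eval q)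
        = (1 - q) ^ l.length * (((1 - q) * x + q) ^ (a - 1) * (PH l x).eval q) := by
      intro x; ring
    simp only [hre]
    rw [intervalIntegral.integral_const_mul, PH_key l a q y, List.length_cons, pow_succ]
    ring

lemma PH_coeff_nonneg : ∀ (l : List ℕ) (y : ℝ), y ∈ Set.Icc (0:ℝ) 1 →
    ∀ m, 0 ≤ (PH l y).coeff m := by
  intro l
  induction l with
  | nil =>
    intro y _ m
    simp only [PH, Polynomial.coeff_one]
    split <;> norm_num
  | cons a l ih =>
    intro y hy m
    rw [PH_coeff_cons]
    apply Finset.sum_nonneg; intro i _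
    apply Finset.sum_nonneg; intro k _
    split
    · apply mul_nonneg (by positivity)
      apply intervalIntegral.integral_nonneg hy.1
      intro x hx
      have hx1 : x ≤ 1 := hx.2.trans hy.2
      apply mul_nonneg (mul_nonneg (pow_nonneg (by linarith) i) (pow_nonneg hx.1 _))
      exact ih x ⟨hx.1, hx1⟩ k
    · exact le_rfl

lemma PH_coeff_pos : ∀ (l : List ℕ) (y : ℝ), y ∈ Set.Ioc (0:ℝ) 1 →
    ∀ j ≤ Dl l, 0 < (PH l y).coeff j := by
  intro l
  induction l with
  | nil =>
    intro y _ j hj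
    have hj0 : j = 0 := by simpa [Dl] using hj
    subst hj0
    simp [PH]
  | cons a l ih =>
    intro y hy j hj
    rw [Dl_cons] at hj
    rw [PH_coeff_cons]
    set i₀ := min (a - 1) j with hi₀
    set m₀ := j - i₀ with hm₀
    have him : j = i₀ + m₀ := by omega
    have hm₀le : m₀ ≤ Dl l := by omega
    have hterm_nonneg : ∀ i ∈ Finset.range (a - 1 + 1), ∀ k ∈ Finset.range (Dl l + 1),
        0 ≤ if j = i + k then
            ((a - 1).choose i : ℝ) *
              ∫ x in (0:ℝ)..y, (1 - x) ^ i * x ^ (a - 1 - i) * (PH l x).coeff k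
          else 0 := by
      intro i _ k _
      split
      · apply mul_nonneg (by positivity)
        apply intervalIntegral.integral_nonneg (le_of_lt hy.1)
        intro x hx
        have hx1 : x ≤ 1 := hx.2.trans hy.2
        apply mul_nonneg (mul_nonneg (pow_nonneg (by linarith) i) (pow_nonneg hx.1 _))
        exact PH_coeff_nonneg l x ⟨hx.1, hx1⟩ k
      · exact le_rfl
    apply Finset.sum_pos'
    · intro i hi
      exact Finset.sum_nonneg fun k hk => hterm_nonneg i hi k hk
    · refine ⟨i₀, Finset.mem_range.mpr (by omega), ?_⟩
      apply Finset.sum_pos'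
      · intro k hk
        exact hterm_nonneg i₀ (Finset.mem_range.mpr (by omega)) k hk
      · refine ⟨m₀, Finset.mem_range.mpr (by omega), ?_⟩
        rw [if_pos him]
        apply mul_pos
        · exact_mod_cast Nat.cast_pos.mpr (Nat.choose_pos (by omega))
        · apply intervalIntegral.intervalIntegral_pos_of_pos_on
          · exact (integrand_continuous l i₀ (a - 1 - i₀) m₀).intervalIntegrable 0 y
          · intro x hx
            have hxy : x < y := hx.2
            have hx1 : x < 1 := lt_of_lt_of_le hxy hy.2
            apply mul_pos (mul_pos (pow_pos (by linarith) i₀) (pow_pos hx.1 _))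
            exact ih x ⟨hx.1, le_of_lt hx1⟩ m₀ hm₀le
          · exact hy.1

lemma Dl_eq (c : List ℕ) (hpos : ∀ a ∈ c, 0 < a) : Dl c = c.sum - c.length := by
  have h : Dl c + c.length = c.sum := by
    induction c with
    | nil => simp [Dl]
    | cons a l ih =>
      have ha : 0 < a := hpos a List.mem_cons_self
      have ih' := ih fun b hb => hpos b (List.mem_cons_of_mem a hb)
      rw [Dl_cons, List.length_cons, List.sum_cons]
      omega
  omega

lemma Dl_reverse (c : List ℕ) : Dl c.reverse = Dl c := by
  simp [Dl, List.map_reverse, List.sum_reverse]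

end RCPaux

open RCPaux in
/-- Theorem: every coefficient of the reduced composition polynomial `f_c`,
i.e. the polynomial of degree `n − k` with `g_c(q) = (1−q)^k · f_c(q)`, is positive. -/
theorem reduced_composition_polynomial_positive (c : List ℕ) (hpos : ∀ a ∈ c, 0 < a)
    (f : Polynomial ℝ) (hdeg : f.natDegree = c.sum - c.length)
    (hf : ∀ q : ℝ, gcomp c q = (1 - q) ^ c.length * f.eval q) :
    ∀ i ≤ c.sum - c.length, 0 < f.coeff i := by
  have heval : ∀ q : ℝ, q ≠ 1 → f.eval q = (PH c.reverse 1).eval q := by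
    intro q hq
    have hA := claimA c.reverse q hq 1
    rw [show (1 - q) * 1 + q = 1 by ring] at hA
    have hgc : gcomp c q = (1 - q) ^ c.length * (PH c.reverse 1).eval q := by
      rw [gcomp, hA, List.length_reverse]
    rw [hf q] at hgc
    have hc : (1 - q) ^ c.length ≠ 0 := pow_ne_zero _ (sub_ne_zero.mpr (Ne.symm hq))
    exact mul_left_cancel₀ hc hgc
  have hfeq : f = PH c.reverse 1 := by
    apply Polynomial.eq_of_infinite_eval_eq
    exact ((Set.finite_singleton (1:ℝ)).infinite_compl).mono fun x hx => heval x hx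
  intro i hi
  rw [hfeq]
  apply PH_coeff_pos c.reverse 1 ⟨one_pos, le_refl 1⟩ i
  rw [Dl_reverse, Dl_eq c hpos]
  exact hi
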